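/- For any connected graph G with n vertices and any nonempty subset S ⊆ V(G) with |S| = k, the expected propagation time satisfies ept(G, S) ≥ log₂ log₂ (2n) - log₂ log₂ (2k). -/

import Mathlib

open Finset

noncomputable def forceProb {V : Type*} [Fintype V] [DecidableEq V]
    (G : SimpleGraph V) [DecidableRel G.Adj] (B : Finset V) (v : V) : ℝ :=
  1 - ∏ u ∈ B.filter (fun u => G.Adj u v),
      (1 - (((G.neighborFinset u ∩ B).card + 1 : ℝ) / (G.degree u)))

noncomputable def stepMass {V : Type*} [Fintype V] [DecidableEq V]
    (G : SimpleGraph V) [DecidableRel G.Adj] (B T : Finset V) : ℝ :=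
  if T ⊆ Bᶜ then
    ∏ v ∈ Bᶜ, (if v ∈ T then forceProb G B v else 1 - forceProb G B v)
  else 0

noncomputable def probAllBlue {V : Type*} [Fintype V] [DecidableEq V]
    (G : SimpleGraph V) [DecidableRel G.Adj] : ℕ → Finset V → ℝ
  | 0, B => if B = Finset.univ then 1 else 0
  | t + 1, B => ∑ T ∈ Bᶜ.powerset, stepMass G B T * probAllBlue G t (B ∪ T)

namespace PZF
variable {V : Type*} [Fintype V] [DecidableEq V] (G : SimpleGraph V) [DecidableRel G.Adj]

lemma factor_mem {B : Finset V} {v u : V} (hv : v ∉ B) (hu : u ∈ B.filter (fun u => G.Adj u v)) :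
    0 ≤ (((G.neighborFinset u ∩ B).card + 1 : ℝ) / (G.degree u)) ∧
      (((G.neighborFinset u ∩ B).card + 1 : ℝ) / (G.degree u)) ≤ 1 := by
  rw [mem_filter] at hu
  have hadj : G.Adj u v := hu.2
  have hdeg : 0 < G.degree u := by
    rw [SimpleGraph.degree_pos_iff_exists_adj]; exact ⟨v, hadj⟩
  constructor
  · positivity
  · rw [div_le_one (by exact_mod_cast hdeg)]
    have hsub : G.neighborFinset u ∩ B ⊆ (G.neighborFinset u).erase v := by
      intro w hw
      rw [mem_inter] at hw
      exact mem_erase.2 ⟨fun h => hv (h ▸ hw.2), hw.1⟩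
    have hcard : (G.neighborFinset u ∩ B).card ≤ G.degree u - 1 := by
      have := card_le_card hsub
      rwa [card_erase_of_mem (by rwa [SimpleGraph.mem_neighborFinset]),
        SimpleGraph.card_neighborFinset_eq_degree] at this
    have : (G.neighborFinset u ∩ B).card + 1 ≤ G.degree u := by omega
    exact_mod_cast this

lemma forceProb_nonneg {B : Finset V} {v : V} (hv : v ∉ B) : 0 ≤ forceProb G B v := by
  unfold forceProb
  have : ∏ u ∈ B.filter (fun u => G.Adj u v),
      (1 - (((G.neighborFinset u ∩ B).card + 1 : ℝ) / (G.degree u))) ≤ 1 :=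
    prod_le_one (fun u hu => by linarith [(factor_mem G hv hu).2]) (fun u hu => by
      linarith [(factor_mem G hv hu).1])
  linarith

lemma forceProb_le_one {B : Finset V} {v : V} (hv : v ∉ B) : forceProb G B v ≤ 1 := by
  unfold forceProb
  have : (0:ℝ) ≤ ∏ u ∈ B.filter (fun u => G.Adj u v),
      (1 - (((G.neighborFinset u ∩ B).card + 1 : ℝ) / (G.degree u))) :=
    prod_nonneg (fun u hu => by linarith [(factor_mem G hv hu).2])
  linarith

lemma stepMass_nonneg (B T : Finset V) : 0 ≤ stepMass G B T := by
  unfold stepMass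
  split
  · refine prod_nonneg fun v hv => ?_
    rw [mem_compl] at hv
    split
    · exact forceProb_nonneg G hv
    · linarith [forceProb_le_one G hv]
  · exact le_refl _

lemma sum_prod_ite {ι : Type*} [DecidableEq ι] (s : Finset ι) (p : ι → ℝ) :
    ∑ T ∈ s.powerset, ∏ v ∈ s, (if v ∈ T then p v else 1 - p v) = 1 := by
  have h : ∀ T ∈ s.powerset, ∏ v ∈ s, (if v ∈ T then p v else 1 - p v)
      = (∏ v ∈ T, p v) * ∏ v ∈ s \ T, (1 - p v) := by
    intro T hT
    rw [mem_powerset] at hT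
    rw [prod_ite, filter_mem_eq_inter, inter_comm, inter_eq_left.2 hT, ← sdiff_eq_filter]
  rw [Finset.sum_congr rfl h, ← prod_add]
  simp

lemma sum_stepMass (B : Finset V) : ∑ T ∈ Bᶜ.powerset, stepMass G B T = 1 := by
  have h : ∀ T ∈ Bᶜ.powerset, stepMass G B T
      = ∏ v ∈ Bᶜ, (if v ∈ T then forceProb G B v else 1 - forceProb G B v) := by
    intro T hT
    rw [mem_powerset] at hT
    rw [stepMass, if_pos hT]
  rw [Finset.sum_congr rfl h, sum_prod_ite]

end PZF

namespace PZF
variable {V : Type*} [Fintype V] [DecidableEq V] (G : SimpleGraph V) [DecidableRel G.Adj]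

lemma probAllBlue_nonneg : ∀ (t : ℕ) (B : Finset V), 0 ≤ probAllBlue G t B
  | 0, B => by unfold probAllBlue; split <;> norm_num
  | t + 1, B => by
    unfold probAllBlue
    exact Finset.sum_nonneg fun T _ =>
      mul_nonneg (stepMass_nonneg G B T) (probAllBlue_nonneg t (B ∪ T))

lemma probAllBlue_le_one : ∀ (t : ℕ) (B : Finset V), probAllBlue G t B ≤ 1
  | 0, B => by unfold probAllBlue; split <;> norm_num
  | t + 1, B => by
    unfold probAllBlue
    calc ∑ T ∈ Bᶜ.powerset, stepMass G B T * probAllBlue G t (B ∪ T)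
        ≤ ∑ T ∈ Bᶜ.powerset, stepMass G B T := by
          refine Finset.sum_le_sum fun T _ => ?_
          have h1 := probAllBlue_le_one t (B ∪ T)
          have h2 := stepMass_nonneg G B T
          nlinarith [probAllBlue_nonneg G t (B ∪ T)]
      _ = 1 := sum_stepMass G B

lemma probAllBlue_univ : ∀ t : ℕ, probAllBlue G t (univ : Finset V) = 1
  | 0 => by unfold probAllBlue; simp
  | t + 1 => by
    unfold probAllBlue
    rw [compl_univ, powerset_empty, sum_singleton]
    rw [stepMass, if_pos (by simp), compl_univ, prod_empty, union_empty,
      probAllBlue_univ t, one_mul]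

lemma probAllBlue_mono : ∀ (t : ℕ) (B : Finset V), probAllBlue G t B ≤ probAllBlue G (t + 1) B
  | 0, B => by
    by_cases h : B = univ
    · subst h; rw [probAllBlue_univ, probAllBlue_univ]
    · have : probAllBlue G 0 B = 0 := by unfold probAllBlue; rw [if_neg h]
      rw [this]; exact probAllBlue_nonneg G 1 B
  | t + 1, B => by
    show probAllBlue G (t+1) B ≤ probAllBlue G (t+2) B
    unfold probAllBlue
    refine Finset.sum_le_sum fun T _ => ?_
    exact mul_le_mul_of_nonneg_left (probAllBlue_mono t (B ∪ T)) (stepMass_nonneg G B T)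

lemma marginal {B : Finset V} {v : V} (hv : v ∈ Bᶜ) :
    ∑ T ∈ Bᶜ.powerset, (if v ∈ T then stepMass G B T else 0) = forceProb G B v := by
  set s := Bᶜ.erase v with hs
  have hvs : v ∉ s := notMem_erase v Bᶜ
  have hins : Bᶜ = insert v s := by rw [hs, insert_erase hv]
  rw [hins, Finset.sum_powerset_insert hvs]
  have h1 : ∀ T ∈ s.powerset, (if v ∈ T then stepMass G B T else 0) = 0 := by
    intro T hT
    rw [mem_powerset] at hT
    rw [if_neg fun h => hvs (hT h)]
  rw [Finset.sum_congr rfl h1, Finset.sum_const_zero, zero_add]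
  have h2 : ∀ T ∈ s.powerset, (if v ∈ insert v T then stepMass G B (insert v T) else 0)
      = forceProb G B v * ∏ w ∈ s, (if w ∈ T then forceProb G B w else 1 - forceProb G B w) := by
    intro T hT
    rw [mem_powerset] at hT
    rw [if_pos (mem_insert_self v T)]
    have hsub : insert v T ⊆ Bᶜ := by
      rw [hins]; exact insert_subset_insert v hT
    rw [stepMass, if_pos hsub, hins, prod_insert hvs, if_pos (mem_insert_self v T)]
    congr 1
    refine Finset.prod_congr rfl fun w hw => ?_
    have hwv : w ≠ v := fun h => hvs (h ▸ hw)
    by_cases hwT : w ∈ T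
    · rw [if_pos (mem_insert_of_mem hwT), if_pos hwT]
    · rw [if_neg (by simp [hwv, hwT]), if_neg hwT]
  rw [Finset.sum_congr rfl h2, ← Finset.mul_sum, sum_prod_ite, mul_one]

end PZF

namespace PZF
variable {V : Type*} [Fintype V] [DecidableEq V] (G : SimpleGraph V) [DecidableRel G.Adj]

lemma sum_forceProb_le (B : Finset V) :
    ∑ v ∈ Bᶜ, forceProb G B v ≤ (B.card : ℝ) ^ 2 := by
  have hstep1 : ∀ v ∈ Bᶜ, forceProb G B v ≤
      ∑ u ∈ B.filter (fun u => G.Adj u v),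
        (((G.neighborFinset u ∩ B).card + 1 : ℝ) / (G.degree u)) := by
    intro v hv
    rw [mem_compl] at hv
    unfold forceProb
    have key : ∀ (s : Finset V), s ⊆ B.filter (fun u => G.Adj u v) →
        1 - ∑ u ∈ s, (((G.neighborFinset u ∩ B).card + 1 : ℝ) / (G.degree u)) ≤
        ∏ u ∈ s, (1 - (((G.neighborFinset u ∩ B).card + 1 : ℝ) / (G.degree u))) := by
      intro s
      induction s using Finset.induction_on with
      | empty => simp
      | insert a s' hx ih =>
        intro hsub
        have ha := factor_mem G hv (hsub (mem_insert_self a s'))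
        have hsub' : s' ⊆ B.filter (fun u => G.Adj u v) :=
          fun w hw => hsub (mem_insert_of_mem hw)
        rw [prod_insert hx, sum_insert hx]
        have hsum_nonneg : (0:ℝ) ≤ ∑ u ∈ s',
            (((G.neighborFinset u ∩ B).card + 1 : ℝ) / (G.degree u)) :=
          Finset.sum_nonneg fun u hu => (factor_mem G hv (hsub' hu)).1
        have ihs := ih hsub'
        nlinarith [ha.1, ha.2]
    linarith [key _ (Finset.Subset.refl _)]
  calc ∑ v ∈ Bᶜ, forceProb G B v
      ≤ ∑ v ∈ Bᶜ, ∑ u ∈ B.filter (fun u => G.Adj u v),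
          (((G.neighborFinset u ∩ B).card + 1 : ℝ) / (G.degree u)) :=
        Finset.sum_le_sum hstep1
    _ = ∑ v ∈ Bᶜ, ∑ u ∈ B, (if G.Adj u v then
          (((G.neighborFinset u ∩ B).card + 1 : ℝ) / (G.degree u)) else 0) := by
        refine Finset.sum_congr rfl fun v _ => ?_
        rw [Finset.sum_filter]
    _ = ∑ u ∈ B, ∑ v ∈ Bᶜ, (if G.Adj u v then
          (((G.neighborFinset u ∩ B).card + 1 : ℝ) / (G.degree u)) else 0) :=
        Finset.sum_comm
    _ ≤ ∑ u ∈ B, (B.card : ℝ) := by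
        refine Finset.sum_le_sum fun u hu => ?_
        set c : ℝ := (((G.neighborFinset u ∩ B).card + 1 : ℝ) / (G.degree u)) with hc
        rw [Finset.sum_ite, Finset.sum_const, Finset.sum_const_zero, add_zero, nsmul_eq_mul]
        have hcnonneg : 0 ≤ c := by positivity
        have hcardfilter : ((Bᶜ.filter (fun v => G.Adj u v)).card : ℝ) ≤ (G.degree u : ℝ) := by
          have : Bᶜ.filter (fun v => G.Adj u v) ⊆ G.neighborFinset u := by
            intro w hw
            rw [mem_filter] at hw
            rw [SimpleGraph.mem_neighborFinset]
            exact hw.2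
          exact_mod_cast card_le_card this
        have hdb : ((G.neighborFinset u ∩ B).card : ℝ) + 1 ≤ (B.card : ℝ) := by
          have hsub : G.neighborFinset u ∩ B ⊆ B.erase u := by
            intro w hw
            rw [mem_inter] at hw
            refine mem_erase.2 ⟨fun h => ?_, hw.2⟩
            exact (G.notMem_neighborFinset_self u) (h ▸ hw.1)
          have := card_le_card hsub
          rw [card_erase_of_mem hu] at this
          have hBpos : 1 ≤ B.card := card_pos.2 ⟨u, hu⟩
          have : (G.neighborFinset u ∩ B).card + 1 ≤ B.card := by omega
          exact_mod_cast this
        calc ((Bᶜ.filter (fun v => G.Adj u v)).card : ℝ) * c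
            ≤ (G.degree u : ℝ) * c := mul_le_mul_of_nonneg_right hcardfilter hcnonneg
          _ ≤ (B.card : ℝ) := by
              by_cases hdeg : (G.degree u : ℝ) = 0
              · rw [hdeg, zero_mul]
                positivity
              · rw [hc, mul_div_cancel₀ _ hdeg]
                exact hdb
    _ = (B.card : ℝ) ^ 2 := by rw [Finset.sum_const, nsmul_eq_mul]; ring

end PZF

noncomputable def fw {V : Type*} [Fintype V] [DecidableEq V] (B : Finset V) : ℝ :=
  Real.logb 2 (Real.logb 2 (2 * (B.card : ℝ)))

namespace PZF

lemma logb_concave_pt {x y a b : ℝ} (hx : 0 < x) (hy : 0 < y) (ha : 0 ≤ a) (hb : 0 ≤ b)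
    (hab : a + b = 1) : a * Real.logb 2 x + b * Real.logb 2 y ≤ Real.logb 2 (a * x + b * y) := by
  have hlog := (strictConcaveOn_log_Ioi.concaveOn).2 (Set.mem_Ioi.2 hx) (Set.mem_Ioi.2 hy)
    ha hb hab
  simp only [smul_eq_mul] at hlog
  have h2 : (0:ℝ) < Real.log 2 := Real.log_pos one_lt_two
  calc a * Real.logb 2 x + b * Real.logb 2 y
      = (a * Real.log x + b * Real.log y) / Real.log 2 := by unfold Real.logb; ring
    _ ≤ Real.log (a * x + b * y) / Real.log 2 := by
        rw [div_le_div_iff_of_pos_right h2]; exact hlog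
    _ = Real.logb 2 (a * x + b * y) := rfl

lemma one_le_logb_two_mul {x : ℝ} (hx : 1 ≤ x) : 1 ≤ Real.logb 2 (2 * x) := by
  have : Real.logb 2 2 = 1 := Real.logb_self_eq_one one_lt_two
  calc (1:ℝ) = Real.logb 2 2 := this.symm
    _ ≤ Real.logb 2 (2 * x) :=
        Real.logb_le_logb_of_le one_lt_two (by norm_num) (by linarith)

lemma concaveOn_gg :
    ConcaveOn ℝ (Set.Ici 1) (fun x : ℝ => Real.logb 2 (Real.logb 2 (2 * x))) := by
  refine ⟨convex_Ici 1, ?_⟩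
  intro x hx y hy a b ha hb hab
  simp only [smul_eq_mul]
  have hx1 : (1:ℝ) ≤ x := hx
  have hy1 : (1:ℝ) ≤ y := hy
  have hu : (1:ℝ) ≤ Real.logb 2 (2 * x) := one_le_logb_two_mul hx1
  have hv : (1:ℝ) ≤ Real.logb 2 (2 * y) := one_le_logb_two_mul hy1
  have hcomb : (1:ℝ) ≤ a * x + b * y := by nlinarith
  have h1 : a * Real.logb 2 (2 * x) + b * Real.logb 2 (2 * y)
      ≤ Real.logb 2 (2 * (a * x + b * y)) := by
    have := logb_concave_pt (x := 2 * x) (y := 2 * y) (by linarith) (by linarith) ha hb hab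
    have heq : a * (2 * x) + b * (2 * y) = 2 * (a * x + b * y) := by ring
    rwa [heq] at this
  have h2 : a * Real.logb 2 (Real.logb 2 (2 * x)) + b * Real.logb 2 (Real.logb 2 (2 * y))
      ≤ Real.logb 2 (a * Real.logb 2 (2 * x) + b * Real.logb 2 (2 * y)) :=
    logb_concave_pt (by linarith) (by linarith) ha hb hab
  have hpos : (0:ℝ) < a * Real.logb 2 (2 * x) + b * Real.logb 2 (2 * y) := by nlinarith
  have h3 : Real.logb 2 (a * Real.logb 2 (2 * x) + b * Real.logb 2 (2 * y))
      ≤ Real.logb 2 (Real.logb 2 (2 * (a * x + b * y))) :=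
    Real.logb_le_logb_of_le one_lt_two hpos h1
  linarith

variable {V : Type*} [Fintype V] [DecidableEq V] (G : SimpleGraph V) [DecidableRel G.Adj]

lemma fw_nonneg {B : Finset V} (hB : B.Nonempty) : 0 ≤ fw B := by
  have h1 : (1:ℝ) ≤ (B.card : ℝ) := by exact_mod_cast card_pos.2 hB
  exact Real.logb_nonneg one_lt_two (one_le_logb_two_mul h1)

lemma expected_card {B : Finset V} (hB : B.Nonempty) :
    ∑ T ∈ Bᶜ.powerset, stepMass G B T * (((B ∪ T).card : ℕ) : ℝ)
      ≤ 2 * (B.card : ℝ) ^ 2 := by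
  have hcardu : ∀ T ∈ Bᶜ.powerset, (((B ∪ T).card : ℕ) : ℝ) = (B.card : ℝ) + (T.card : ℝ) := by
    intro T hT
    rw [mem_powerset] at hT
    have hdisj : Disjoint B T := by
      rw [Finset.disjoint_right]
      intro a haT haB
      exact (mem_compl.1 (hT haT)) haB
    rw [← Nat.cast_add, ← card_union_of_disjoint hdisj]
  have hT2 : ∑ T ∈ Bᶜ.powerset, stepMass G B T * (T.card : ℝ)
      = ∑ v ∈ Bᶜ, forceProb G B v := by
    have h1 : ∀ T ∈ Bᶜ.powerset, stepMass G B T * (T.card : ℝ)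
        = ∑ v ∈ Bᶜ, (if v ∈ T then stepMass G B T else 0) := by
      intro T hT
      rw [mem_powerset] at hT
      have : (T.card : ℝ) = ∑ v ∈ Bᶜ, (if v ∈ T then (1:ℝ) else 0) := by
        rw [Finset.sum_ite, Finset.sum_const, Finset.sum_const_zero, add_zero,
          filter_mem_eq_inter, inter_comm, inter_eq_left.2 hT]
        simp
      rw [this, Finset.mul_sum]
      refine Finset.sum_congr rfl fun v _ => ?_
      split <;> ring
    rw [Finset.sum_congr rfl h1, Finset.sum_comm]
    exact Finset.sum_congr rfl fun v hv => marginal G hv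
  have hBc : (1:ℝ) ≤ (B.card : ℝ) := by exact_mod_cast card_pos.2 hB
  calc ∑ T ∈ Bᶜ.powerset, stepMass G B T * (((B ∪ T).card : ℕ) : ℝ)
      = ∑ T ∈ Bᶜ.powerset, (stepMass G B T * (B.card : ℝ) + stepMass G B T * (T.card : ℝ)) := by
        refine Finset.sum_congr rfl fun T hT => ?_
        rw [hcardu T hT]; ring
    _ = (B.card : ℝ) + ∑ v ∈ Bᶜ, forceProb G B v := by
        rw [Finset.sum_add_distrib, ← Finset.sum_mul, sum_stepMass, one_mul, hT2]
    _ ≤ (B.card : ℝ) + (B.card : ℝ)^2 := by linarith [sum_forceProb_le G B]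
    _ ≤ 2 * (B.card : ℝ)^2 := by nlinarith

lemma drift {B : Finset V} (hB : B.Nonempty) :
    ∑ T ∈ Bᶜ.powerset, stepMass G B T * fw (B ∪ T) ≤ fw B + 1 := by
  set c : ℝ := (B.card : ℝ) with hc
  have hBc : (1:ℝ) ≤ c := by
    have := card_pos.2 hB
    rw [hc]; exact_mod_cast this
  have hmem : ∀ T ∈ Bᶜ.powerset, (((B ∪ T).card : ℕ) : ℝ) ∈ Set.Ici (1:ℝ) := by
    intro T _
    have : B.card ≤ (B ∪ T).card := card_le_card subset_union_left
    have h1 : 1 ≤ (B ∪ T).card := le_trans (card_pos.2 hB) this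
    rw [Set.mem_Ici]
    exact_mod_cast h1
  have hjensen := concaveOn_gg.le_map_sum (t := Bᶜ.powerset)
    (w := stepMass G B) (p := fun T => (((B ∪ T).card : ℕ) : ℝ))
    (fun T _ => stepMass_nonneg G B T) (sum_stepMass G B) hmem
  simp only [smul_eq_mul] at hjensen
  set E : ℝ := ∑ T ∈ Bᶜ.powerset, stepMass G B T * (((B ∪ T).card : ℕ) : ℝ) with hE
  have hE1 : (1:ℝ) ≤ E := by
    rw [hE]
    calc (1:ℝ) = ∑ T ∈ Bᶜ.powerset, stepMass G B T := (sum_stepMass G B).symm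
      _ ≤ _ := Finset.sum_le_sum fun T hT => by
          have := hmem T hT
          nlinarith [stepMass_nonneg G B T, Set.mem_Ici.1 this]
  have hE2 : E ≤ 2 * c ^ 2 := expected_card G hB
  have step1 : ∑ T ∈ Bᶜ.powerset, stepMass G B T * fw (B ∪ T)
      ≤ Real.logb 2 (Real.logb 2 (2 * E)) := hjensen
  have mono1 : Real.logb 2 (2 * E) ≤ Real.logb 2 (2 * (2 * c ^ 2)) :=
    Real.logb_le_logb_of_le one_lt_two (by linarith) (by linarith)
  have hlogE : (1:ℝ) ≤ Real.logb 2 (2 * E) := one_le_logb_two_mul hE1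
  have mono2 : Real.logb 2 (Real.logb 2 (2 * E))
      ≤ Real.logb 2 (Real.logb 2 (2 * (2 * c ^ 2))) :=
    Real.logb_le_logb_of_le one_lt_two (by linarith) mono1
  have hfinal : Real.logb 2 (Real.logb 2 (2 * (2 * c ^ 2))) = fw B + 1 := by
    have hsq : 2 * (2 * c ^ 2) = (2 * c) ^ 2 := by ring
    have hL : (1:ℝ) ≤ Real.logb 2 (2 * c) := one_le_logb_two_mul hBc
    rw [hsq, Real.logb_pow]
    rw [show ((2:ℕ) : ℝ) * Real.logb 2 (2 * c) = 2 * Real.logb 2 (2 * c) by norm_num]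
    rw [Real.logb_mul (by norm_num) (by linarith)]
    rw [Real.logb_self_eq_one one_lt_two]
    rw [fw, ← hc]
    ring
  linarith

end PZF

noncomputable def Ef {V : Type*} [Fintype V] [DecidableEq V]
    (G : SimpleGraph V) [DecidableRel G.Adj] : ℕ → Finset V → ℝ
  | 0, B => fw B
  | t + 1, B => ∑ T ∈ Bᶜ.powerset, stepMass G B T * Ef G t (B ∪ T)

namespace PZF
variable {V : Type*} [Fintype V] [DecidableEq V] (G : SimpleGraph V) [DecidableRel G.Adj]

lemma Ef_succ_le : ∀ (t : ℕ) (B : Finset V), B.Nonempty →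
    Ef G (t + 1) B ≤ Ef G t B + (1 - probAllBlue G t B)
  | 0, B, hB => by
    by_cases h : B = univ
    · subst h
      have : Ef G 1 (univ : Finset V) = fw (univ : Finset V) := by
        show (∑ T ∈ (univ : Finset V)ᶜ.powerset, stepMass G univ T * Ef G 0 (univ ∪ T)) = _
        rw [compl_univ, powerset_empty, sum_singleton, union_empty]
        rw [stepMass, if_pos (by simp), compl_univ, prod_empty, one_mul]
        rfl
      rw [this, probAllBlue, if_pos rfl]
      show fw (univ : Finset V) ≤ fw (univ : Finset V) + (1 - 1)
      simp
    · have h0 : probAllBlue G 0 B = 0 := by rw [probAllBlue, if_neg h]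
      rw [h0]
      have hd := drift G hB
      show (∑ T ∈ Bᶜ.powerset, stepMass G B T * Ef G 0 (B ∪ T)) ≤ Ef G 0 B + (1 - 0)
      show (∑ T ∈ Bᶜ.powerset, stepMass G B T * fw (B ∪ T)) ≤ fw B + (1 - 0)
      linarith
  | t + 1, B, hB => by
    show (∑ T ∈ Bᶜ.powerset, stepMass G B T * Ef G (t + 1) (B ∪ T)) ≤
      (∑ T ∈ Bᶜ.powerset, stepMass G B T * Ef G t (B ∪ T)) + (1 - probAllBlue G (t + 1) B)
    have key : ∀ T ∈ Bᶜ.powerset, stepMass G B T * Ef G (t + 1) (B ∪ T) ≤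
        stepMass G B T * (Ef G t (B ∪ T) + (1 - probAllBlue G t (B ∪ T))) := fun T _ =>
      mul_le_mul_of_nonneg_left
        (Ef_succ_le t (B ∪ T) (hB.mono subset_union_left)) (stepMass_nonneg G B T)
    calc (∑ T ∈ Bᶜ.powerset, stepMass G B T * Ef G (t + 1) (B ∪ T))
        ≤ ∑ T ∈ Bᶜ.powerset, stepMass G B T * (Ef G t (B ∪ T) + (1 - probAllBlue G t (B ∪ T))) :=
          Finset.sum_le_sum key
      _ = (∑ T ∈ Bᶜ.powerset, stepMass G B T * Ef G t (B ∪ T)) +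
          ((∑ T ∈ Bᶜ.powerset, stepMass G B T) -
            ∑ T ∈ Bᶜ.powerset, stepMass G B T * probAllBlue G t (B ∪ T)) := by
          rw [← Finset.sum_sub_distrib, ← Finset.sum_add_distrib]
          refine Finset.sum_congr rfl fun T _ => by ring
      _ = _ := by rw [sum_stepMass, probAllBlue]

lemma Ef_le (B : Finset V) (hB : B.Nonempty) : ∀ t : ℕ,
    Ef G t B ≤ fw B + ∑ j ∈ Finset.range t, (1 - probAllBlue G j B)
  | 0 => by simp [Ef]
  | t + 1 => by
    have h1 := Ef_succ_le G t B hB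
    have h2 := Ef_le B hB t
    rw [Finset.sum_range_succ]
    linarith

lemma Ef_ge : ∀ (t : ℕ) (B : Finset V), B.Nonempty →
    fw (univ : Finset V) * probAllBlue G t B ≤ Ef G t B
  | 0, B, hB => by
    by_cases h : B = univ
    · subst h
      rw [probAllBlue, if_pos rfl, mul_one]
      exact le_refl _
    · rw [probAllBlue, if_neg h, mul_zero]
      exact fw_nonneg hB
  | t + 1, B, hB => by
    show _ ≤ ∑ T ∈ Bᶜ.powerset, stepMass G B T * Ef G t (B ∪ T)
    rw [probAllBlue, Finset.mul_sum]
    refine Finset.sum_le_sum fun T _ => ?_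
    have := Ef_ge t (B ∪ T) (hB.mono subset_union_left)
    have hm := stepMass_nonneg G B T
    calc fw (univ : Finset V) * (stepMass G B T * probAllBlue G t (B ∪ T))
        = stepMass G B T * (fw (univ : Finset V) * probAllBlue G t (B ∪ T)) := by ring
      _ ≤ stepMass G B T * Ef G t (B ∪ T) := mul_le_mul_of_nonneg_left this hm

end PZF

namespace PZF
variable {V : Type*} [Fintype V] [DecidableEq V] (G : SimpleGraph V) [DecidableRel G.Adj]

lemma cross_of_walk {B : Finset V} {x y : V} (p : G.Walk x y) (hx : x ∈ B) (hy : y ∉ B) :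
    ∃ v ∉ B, ∃ u ∈ B, G.Adj u v := by
  induction p with
  | nil => exact absurd hx hy
  | @cons a c d h q ih =>
    by_cases hc : c ∈ B
    · exact ih hc hy
    · exact ⟨c, hc, a, hx, h⟩

lemma exists_crossing (hG : G.Connected) {B : Finset V} (hB : B.Nonempty) (hBu : B ≠ univ) :
    ∃ v ∉ B, ∃ u ∈ B, G.Adj u v := by
  obtain ⟨x, hx⟩ := hB
  have : ∃ y, y ∉ B := by
    by_contra h
    push_neg at h
    exact hBu (eq_univ_iff_forall.2 h)
  obtain ⟨y, hy⟩ := this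
  obtain ⟨p⟩ := hG.preconnected x y
  exact cross_of_walk G p hx hy

lemma forceProb_ge {B : Finset V} {v u : V} (hv : v ∉ B) (hu : u ∈ B) (hadj : G.Adj u v) :
    1 / (Fintype.card V : ℝ) ≤ forceProb G B v := by
  unfold forceProb
  set s := B.filter (fun u => G.Adj u v) with hs
  have hus : u ∈ s := mem_filter.2 ⟨hu, hadj⟩
  set pu : ℝ := (((G.neighborFinset u ∩ B).card + 1 : ℝ) / (G.degree u)) with hpu
  have hdeg : 0 < G.degree u := by
    rw [SimpleGraph.degree_pos_iff_exists_adj]; exact ⟨v, hadj⟩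
  have hdegle : (G.degree u : ℝ) ≤ (Fintype.card V : ℝ) := by
    exact_mod_cast (G.degree_lt_card_verts u).le
  have hpu_ge : 1 / (Fintype.card V : ℝ) ≤ pu := by
    have h1 : 1 / (Fintype.card V : ℝ) ≤ 1 / (G.degree u : ℝ) :=
      one_div_le_one_div_of_le (by exact_mod_cast hdeg) hdegle
    have h2 : 1 / (G.degree u : ℝ) ≤ pu := by
      rw [hpu, div_le_div_iff_of_pos_right (by exact_mod_cast hdeg : (0:ℝ) < (G.degree u : ℝ))]
      have : (0:ℝ) ≤ ((G.neighborFinset u ∩ B).card : ℝ) := by positivity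
      linarith
    linarith
  have hprod : ∏ w ∈ s, (1 - (((G.neighborFinset w ∩ B).card + 1 : ℝ) / (G.degree w)))
      ≤ 1 - pu := by
    rw [← Finset.mul_prod_erase s _ hus]
    have h1 : ∏ w ∈ s.erase u,
        (1 - (((G.neighborFinset w ∩ B).card + 1 : ℝ) / (G.degree w))) ≤ 1 :=
      prod_le_one (fun w hw => by linarith [(factor_mem G hv (mem_of_mem_erase hw)).2])
        (fun w hw => by linarith [(factor_mem G hv (mem_of_mem_erase hw)).1])
    have h0 : (0:ℝ) ≤ 1 - pu := by linarith [(factor_mem G hv hus).2]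
    calc (1 - pu) * ∏ w ∈ s.erase u,
          (1 - (((G.neighborFinset w ∩ B).card + 1 : ℝ) / (G.degree w)))
        ≤ (1 - pu) * 1 := mul_le_mul_of_nonneg_left h1 h0
      _ = 1 - pu := mul_one _
  linarith

lemma stepMass_empty_le (hG : G.Connected) {B : Finset V} (hB : B.Nonempty) (hBu : B ≠ univ) :
    stepMass G B ∅ ≤ 1 - 1 / (Fintype.card V : ℝ) := by
  obtain ⟨v, hv, u, hu, hadj⟩ := exists_crossing G hG hB hBu
  have hvc : v ∈ Bᶜ := mem_compl.2 hv
  rw [stepMass, if_pos (empty_subset _)]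
  have heq : ∀ w ∈ Bᶜ, (if w ∈ (∅ : Finset V) then forceProb G B w else 1 - forceProb G B w)
      = 1 - forceProb G B w := fun w _ => by rw [if_neg (notMem_empty w)]
  rw [Finset.prod_congr rfl heq]
  rw [← Finset.mul_prod_erase Bᶜ _ hvc]
  have h1 : ∏ w ∈ Bᶜ.erase v, (1 - forceProb G B w) ≤ 1 :=
    prod_le_one
      (fun w hw => by linarith [forceProb_le_one G (mem_compl.1 (mem_of_mem_erase hw))])
      (fun w hw => by linarith [forceProb_nonneg G (mem_compl.1 (mem_of_mem_erase hw))])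
  have h0 : (0:ℝ) ≤ 1 - forceProb G B v := by linarith [forceProb_le_one G hv]
  have h2 : 1 - forceProb G B v ≤ 1 - 1 / (Fintype.card V : ℝ) := by
    linarith [forceProb_ge G hv hu hadj]
  calc (1 - forceProb G B v) * ∏ w ∈ Bᶜ.erase v, (1 - forceProb G B w)
      ≤ (1 - forceProb G B v) * 1 := mul_le_mul_of_nonneg_left h1 h0
    _ ≤ 1 - 1 / (Fintype.card V : ℝ) := by rw [mul_one]; exact h2

end PZF

namespace PZF
variable {V : Type*} [Fintype V] [DecidableEq V] (G : SimpleGraph V) [DecidableRel G.Adj]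

lemma summable_tail (hG : G.Connected) :
    ∀ (m : ℕ) (B : Finset V), Bᶜ.card = m → B.Nonempty →
      Summable (fun t => 1 - probAllBlue G t B) := by
  intro m
  induction m using Nat.strong_induction_on with
  | _ m ih =>
    intro B hm hB
    by_cases hBu : B = univ
    · subst hBu
      have : (fun t => 1 - probAllBlue G t (univ : Finset V)) = fun _ => 0 := by
        funext t; rw [probAllBlue_univ]; ring
      rw [this]
      exact summable_zero
    · -- setup
      set n : ℝ := (Fintype.card V : ℝ) with hn
      have hnpos : (0:ℝ) < n := by
        rw [hn]
        exact_mod_cast Fintype.card_pos_iff.2 ⟨hB.choose⟩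
      set r : ℝ := stepMass G B ∅ with hr
      have hr0 : 0 ≤ r := stepMass_nonneg G B ∅
      have hr1 : r ≤ 1 - 1 / n := stepMass_empty_le G hG hB hBu
      have hrlt : r < 1 := by
        have : 0 < 1 / n := by positivity
        linarith
      set q : ℕ → ℝ := fun t => 1 - probAllBlue G t B with hq
      have hq0 : ∀ t, 0 ≤ q t := fun t => by
        have := probAllBlue_le_one G t B; simp only [hq]; linarith
      set h : ℕ → ℝ := fun t => ∑ T ∈ Bᶜ.powerset.erase ∅,
        stepMass G B T * (1 - probAllBlue G t (B ∪ T)) with hh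
      have hsummh : Summable h := by
        apply summable_sum
        intro T hT
        rw [mem_erase, mem_powerset] at hT
        have hTne : T.Nonempty := nonempty_iff_ne_empty.2 hT.1
        have hsub : (B ∪ T)ᶜ.card < m := by
          rw [← hm]
          apply card_lt_card
          rw [Finset.ssubset_iff_of_subset (compl_subset_compl.2 subset_union_left)]
          obtain ⟨x, hx⟩ := hTne
          refine ⟨x, ?_, ?_⟩
          · rw [mem_compl]; exact (mem_compl.1 (hT.2 hx))
          · rw [mem_compl, not_not]
            exact mem_union_right B hx
        have := ih _ hsub (B ∪ T) rfl (hB.mono subset_union_left)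
        exact this.mul_left (stepMass G B T)
      have hh0 : ∀ t, 0 ≤ h t := by
        intro t
        refine Finset.sum_nonneg fun T _ => mul_nonneg (stepMass_nonneg G B T) ?_
        linarith [probAllBlue_le_one G t (B ∪ T)]
      -- recurrence q (t+1) = r * q t + h t
      have hrec : ∀ t, q (t + 1) = r * q t + h t := by
        intro t
        have hsplit : probAllBlue G (t+1) B = r * probAllBlue G t B +
            ∑ T ∈ Bᶜ.powerset.erase ∅, stepMass G B T * probAllBlue G t (B ∪ T) := by
          rw [probAllBlue, ← Finset.add_sum_erase Bᶜ.powerset _ (empty_mem_powerset Bᶜ),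
            union_empty]
        have hones : (1:ℝ) = r + ∑ T ∈ Bᶜ.powerset.erase ∅, stepMass G B T := by
          have h1 := sum_stepMass G B
          rw [← Finset.add_sum_erase Bᶜ.powerset (stepMass G B) (empty_mem_powerset Bᶜ)] at h1
          rw [hr]
          linarith
        simp only [hq, hh, hsplit]
        have hdist : ∑ T ∈ Bᶜ.powerset.erase ∅, stepMass G B T * (1 - probAllBlue G t (B ∪ T))
            = (∑ T ∈ Bᶜ.powerset.erase ∅, stepMass G B T)
              - ∑ T ∈ Bᶜ.powerset.erase ∅, stepMass G B T * probAllBlue G t (B ∪ T) := by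
          rw [← Finset.sum_sub_distrib]
          exact Finset.sum_congr rfl fun T _ => by ring
        rw [hdist]
        have hexp : r * (1 - probAllBlue G t B) = r - r * probAllBlue G t B := by ring
        rw [hexp]
        linarith
      -- bounded partial sums
      set H : ℝ := ∑' t, h t with hH
      have hH0 : 0 ≤ H := tsum_nonneg hh0
      have hHub : ∀ T : ℕ, ∑ t ∈ Finset.range T, h t ≤ H := fun T =>
        hsummh.sum_le_tsum (Finset.range T) (fun t _ => hh0 t)
      have hbound : ∀ T : ℕ, ∑ t ∈ Finset.range T, q t ≤ (q 0 + H) / (1 - r) := by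
        intro T
        induction T with
        | zero =>
          simp only [Finset.range_zero, Finset.sum_empty]
          exact div_nonneg (by linarith [hq0 0]) (by linarith)
        | succ T ihT =>
          rw [Finset.sum_range_succ']
          have : ∑ i ∈ Finset.range T, q (i + 1)
              = r * ∑ i ∈ Finset.range T, q i + ∑ i ∈ Finset.range T, h i := by
            rw [Finset.mul_sum, ← Finset.sum_add_distrib]
            exact Finset.sum_congr rfl fun i _ => hrec i
          rw [this]
          have h1 : r * ∑ i ∈ Finset.range T, q i ≤ r * ((q 0 + H) / (1 - r)) :=
            mul_le_mul_of_nonneg_left ihT hr0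
          have h2 : ∑ i ∈ Finset.range T, h i ≤ H := hHub T
          have key : r * ((q 0 + H) / (1 - r)) + H + q 0 ≤ (q 0 + H) / (1 - r) := by
            have hpos : 0 < 1 - r := by linarith
            have hXe : (q 0 + H) / (1 - r) * (1 - r) = q 0 + H :=
              div_mul_cancel₀ _ (ne_of_gt hpos)
            nlinarith [hXe]
          linarith
      exact summable_of_sum_range_le hq0 hbound

end PZF

noncomputable def ept {V : Type*} [Fintype V] [DecidableEq V]
    (G : SimpleGraph V) [DecidableRel G.Adj] (S : Finset V) : ℝ :=
  ∑' t : ℕ, (1 - probAllBlue G t S)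

theorem ept_lower_bound {V : Type*} [Fintype V] [DecidableEq V]
    (G : SimpleGraph V) [DecidableRel G.Adj] (hG : G.Connected)
    (S : Finset V) (hS : S.Nonempty) (k : ℕ) (hk : S.card = k) :
    Real.logb 2 (Real.logb 2 (2 * (Fintype.card V : ℝ))) -
        Real.logb 2 (Real.logb 2 (2 * (k : ℝ))) ≤ ept G S := by
  classical
  have hV : Nonempty V := ⟨hS.choose⟩
  have hfwS : fw S = Real.logb 2 (Real.logb 2 (2 * (k : ℝ))) := by rw [fw, hk]
  have hfwU : fw (univ : Finset V) =
      Real.logb 2 (Real.logb 2 (2 * (Fintype.card V : ℝ))) := by rw [fw, card_univ]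
  rw [← hfwS, ← hfwU]
  set M : ℝ := fw (univ : Finset V) with hM
  set s0 : ℝ := fw S with hs0
  set q : ℕ → ℝ := fun t => 1 - probAllBlue G t S with hqdef
  have hq0 : ∀ t, 0 ≤ q t := fun t => by
    have := PZF.probAllBlue_le_one G t S
    simp only [hqdef]; linarith
  have hsum : Summable q := PZF.summable_tail G hG Sᶜ.card S rfl hS
  have hept : ept G S = ∑' t, q t := rfl
  have hept0 : 0 ≤ ept G S := by rw [hept]; exact tsum_nonneg hq0
  have hMnn : 0 ≤ M := PZF.fw_nonneg univ_nonempty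
  have key1 : ∀ t : ℕ, M * probAllBlue G t S ≤ s0 + ept G S := by
    intro t
    have h1 := PZF.Ef_ge G t S hS
    have h2 := PZF.Ef_le G S hS t
    have h3 : ∑ j ∈ Finset.range t, q j ≤ ept G S := by
      rw [hept]
      exact hsum.sum_le_tsum (Finset.range t) (fun j _ => hq0 j)
    simp only [hqdef] at h2 h3
    linarith
  have hmono : Monotone (fun t => probAllBlue G t S) :=
    monotone_nat_of_le_succ (fun t => PZF.probAllBlue_mono G t S)
  have key2 : ∀ t : ℕ, (t : ℝ) * q t ≤ ept G S := by
    intro t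
    have hterm : ∀ j ∈ Finset.range t, q t ≤ q j := by
      intro j hj
      have := hmono (le_of_lt (mem_range.1 hj))
      simp only [hqdef]
      linarith
    calc (t : ℝ) * q t = ∑ _j ∈ Finset.range t, q t := by
          rw [Finset.sum_const, card_range, nsmul_eq_mul]
      _ ≤ ∑ j ∈ Finset.range t, q j := Finset.sum_le_sum hterm
      _ ≤ ept G S := by
          rw [hept]
          exact hsum.sum_le_tsum (Finset.range t) (fun j _ => hq0 j)
  by_contra hcon
  push_neg at hcon
  set ε : ℝ := M - s0 - ept G S with hε
  have hεpos : 0 < ε := by simp only [hε]; linarith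
  obtain ⟨t, ht⟩ := exists_nat_gt (M * ept G S / ε)
  have htpos : (0 : ℝ) < t := lt_of_le_of_lt (by positivity) ht
  have hqt : q t ≤ ept G S / t := (le_div_iff₀ htpos).2 (by linarith [key2 t])
  have hbound : M - s0 ≤ ept G S + M * q t := by
    have := key1 t
    have hPt : probAllBlue G t S = 1 - q t := by simp only [hqdef]; ring
    rw [hPt] at this
    nlinarith
  have h4 : M * q t ≤ M * (ept G S / t) := mul_le_mul_of_nonneg_left hqt hMnn
  have h5 : M * (ept G S / t) < ε := by
    have heq : M * (ept G S / t) = M * ept G S / t := by ring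
    rw [heq, div_lt_iff₀ htpos]
    have h6 : M * ept G S < (t : ℝ) * ε := (div_lt_iff₀ hεpos).1 ht
    linarith
  have hchain : M - s0 < M - s0 - ept G S + ept G S := by
    calc M - s0 ≤ ept G S + M * q t := hbound
      _ ≤ ept G S + M * (ept G S / ↑t) := by linarith
      _ < ept G S + ε := by linarith
      _ = M - s0 - ept G S + ept G S := by rw [hε]; ring
  linarith
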